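/- For an F-linear similitude λ of h with multiplier r (i.e., h(λv, λw) = r·h(v,w)), the conjugate Λ^{n-ℓ}λ ∘ J ∘ (Λ^ℓ λ)^{-1} equals t·J where t = r^{-ℓ}·det λ. In particular similitudes normalize the set F·id ∘ J. -/

import Mathlib

open ExteriorAlgebra

/-- The wedge product of a family of vectors in the exterior algebra. -/
noncomputable def wedgeFam (F : Type*) {V : Type*} [Field F] [AddCommGroup V] [Module F V]
    {k : ℕ} (u : Fin k → V) : ExteriorAlgebra F V :=
  (List.ofFn fun i => ExteriorAlgebra.ι F (u i)).prod


open ExteriorAlgebra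

section Aux
variable {F V : Type*} [Field F] [AddCommGroup V] [Module F V]

/-- wedge of a list of vectors -/
noncomputable def wL (F : Type*) {V : Type*} [Field F] [AddCommGroup V] [Module F V]
    (l : List V) : ExteriorAlgebra F V := (l.map (ι F)).prod

lemma wL_append (l₁ l₂ : List V) : wL F (l₁ ++ l₂) = wL F l₁ * wL F l₂ := by
  simp [wL]

lemma wL_ofFn {k : ℕ} (u : Fin k → V) : wL F (List.ofFn u) = ιMulti F k u := by
  rw [ιMulti_apply, wL, List.map_ofFn]
  rfl

lemma wL_eq_ιMulti (l : List V) : wL F l = ιMulti F l.length l.get := by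
  conv_lhs => rw [← List.ofFn_get l]
  rw [wL_ofFn]

lemma wL_mem (l : List V) : wL F l ∈ ⋀[F]^(l.length) V := by
  rw [wL_eq_ιMulti]
  exact ιMulti_range F l.length (Set.mem_range_self _)

lemma wL_zero_of_not_nodup {l : List V} (h : ¬ l.Nodup) : wL F l = 0 := by
  rw [wL_eq_ιMulti]
  exact AlternatingMap.map_eq_zero_of_not_injective _ _
    (fun hinj => h (List.nodup_iff_injective_get.2 hinj))

lemma wL_perm {l l' : List V} (h : l.Perm l') :
    wL F l = wL F l' ∨ wL F l = - wL F l' := by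
  induction h with
  | nil => exact Or.inl rfl
  | cons x h ih =>
      rcases ih with ih | ih <;> simp only [wL, List.map_cons, List.prod_cons] at *
      · rw [show (List.map (ι F) _).prod = wL F _ from rfl] at ih ⊢
        rw [ih]; exact Or.inl rfl
      · rw [show (List.map (ι F) _).prod = wL F _ from rfl] at ih ⊢
        rw [ih, mul_neg]; exact Or.inr rfl
  | swap x y l =>
      right
      simp only [wL, List.map_cons, List.prod_cons]
      have hanti : ι F y * ι F x = -(ι F x * ι F y) :=
        eq_neg_of_add_eq_zero_left (ι_add_mul_swap (R := F) y x)
      rw [← mul_assoc, ← mul_assoc, hanti, neg_mul]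
  | trans h1 h2 ih1 ih2 =>
      rcases ih1 with ih1 | ih1 <;> rcases ih2 with ih2 | ih2 <;>
        simp [ih1, ih2]

end Aux
section Aux2
variable {F V : Type*} [Field F] [AddCommGroup V] [Module F V]
variable {n : ℕ} (v : Module.Basis (Fin n) F V)

/-- wedge of basis vectors indexed by a finset, in increasing order -/
noncomputable def eS (v : Module.Basis (Fin n) F V) (S : Finset (Fin n)) : ExteriorAlgebra F V :=
  wL F ((S.sort (· ≤ ·)).map v)

lemma eS_mem (S : Finset (Fin n)) : eS v S ∈ ⋀[F]^(S.card) V := by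
  have hlen : ((S.sort (· ≤ ·)).map ⇑v).length = S.card := by
    simp [Finset.length_sort]
  exact hlen ▸ wL_mem _

lemma eS_mul_eq_zero {S T : Finset (Fin n)} (hST : ¬ Disjoint S T) :
    eS v S * eS v T = 0 := by
  rw [eS, eS, ← wL_append, ← List.map_append]
  apply wL_zero_of_not_nodup
  intro hnd
  have hnd' : (S.sort (· ≤ ·) ++ T.sort (· ≤ ·)).Nodup := hnd.of_map _
  rw [List.nodup_append] at hnd'
  obtain ⟨i, hiS, hiT⟩ := Finset.not_disjoint_iff.1 hST
  exact hnd'.2.2 _ ((Finset.mem_sort _).2 hiS) _ ((Finset.mem_sort _).2 hiT) rfl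

lemma eS_mul_compl (T : Finset (Fin n)) :
    eS v T * eS v Tᶜ = eS v Finset.univ ∨ eS v T * eS v Tᶜ = - eS v Finset.univ := by
  rw [eS, eS, ← wL_append, ← List.map_append]
  have hnd : (T.sort (· ≤ ·) ++ Tᶜ.sort (· ≤ ·)).Nodup := by
    rw [List.nodup_append]
    refine ⟨Finset.sort_nodup _ _, Finset.sort_nodup _ _, ?_⟩
    intro i hi i' hi' hii; subst hii
    exact absurd ((Finset.mem_sort _).1 hi') (by
      simpa using (Finset.mem_sort (α := Fin n) (· ≤ ·)).1 hi)
  have hperm : (T.sort (· ≤ ·) ++ Tᶜ.sort (· ≤ ·)).Perm (Finset.univ.sort (· ≤ ·)) := by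
    apply List.perm_of_nodup_nodup_toFinset_eq hnd (Finset.sort_nodup _ _)
    rw [List.toFinset_append]
    simp [Finset.sort_toFinset]
  exact wL_perm (hperm.map v)

lemma eS_univ_ne_zero : eS v Finset.univ ≠ 0 := by
  classical
  set l : List (Fin n) := Finset.univ.sort (· ≤ ·) with hl
  have hlen : l.length = n := by simp [hl, Finset.length_sort]
  have hlnd : l.Nodup := Finset.sort_nodup _ _
  have hlen2 : (l.map ⇑v).length = n := by simp [hlen]
  -- the functional
  set f : ∀ i, V [⋀^Fin i]→ₗ[F] F :=
    fun i => if h : i = n then (v.det).domDomCongr (finCongr h.symm) else 0 with hf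
  set B := liftAlternating (R := F) (M := V) (N := F) f with hB
  intro h0
  have hval : B (eS v Finset.univ) = 0 := by rw [h0, map_zero]
  rw [eS, wL_eq_ιMulti, liftAlternating_apply_ιMulti] at hval
  -- compute f applied
  rw [hf] at hval
  simp only [← hl, hlen2, dif_pos] at hval
  rw [AlternatingMap.domDomCongr_apply] at hval
  -- the family is v ∘ g for an injective g
  set g : Fin n → Fin n := fun i => l.get (Fin.cast hlen.symm i) with hg
  have hgfun : ((l.map ⇑v).get ∘ ⇑(finCongr hlen2.symm)) = ⇑v ∘ g := by
    funext i
    simp [hg, List.getElem_map, finCongr]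
  rw [hgfun] at hval
  have hginj : Function.Injective g := by
    intro a c hac
    have := List.nodup_iff_injective_get.1 hlnd hac
    exact Fin.ext (by simpa using congrArg Fin.val this)
  let ρ : Equiv.Perm (Fin n) := Equiv.ofBijective g (Finite.injective_iff_bijective.1 hginj)
  have : (⇑v ∘ g) = (⇑v ∘ ρ) := rfl
  rw [this, AlternatingMap.map_perm, Module.Basis.det_self] at hval
  rcases Int.units_eq_one_or (Equiv.Perm.sign ρ) with hs | hs <;> rw [hs] at hval <;>
    simp at hval

end Aux2
section Aux3
variable {F V : Type*} [Field F] [AddCommGroup V] [Module F V]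
variable {n : ℕ}

lemma mem_span_eS (v : Module.Basis (Fin n) F V) {k : ℕ} {z : ExteriorAlgebra F V} (hz : z ∈ ⋀[F]^k V) :
    z ∈ Submodule.span F
      (Set.range fun S : {S : Finset (Fin n) // S.card = k} => eS v (S : Finset (Fin n))) := by
  classical
  rw [← ιMulti_span_fixedDegree] at hz
  induction hz using Submodule.span_induction with
  | mem x hx =>
      obtain ⟨u, rfl⟩ := hx
      have hu : (ιMulti F k) u
          = (ιMulti F k) (fun i => ∑ j, v.repr (u i) j • v j) := by
        congr 1
        funext i
        rw [v.sum_repr (u i)]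
      rw [hu]
      have expand : (ιMulti F k (M := V)) (fun i => ∑ j, v.repr (u i) j • v j)
          = ∑ m : Fin k → Fin n,
              (∏ i, v.repr (u i) (m i)) • (ιMulti F k) (fun i => v (m i)) := by
        rw [show ((ιMulti F k (M := V)) (fun i => ∑ j, v.repr (u i) j • v j))
            = (ιMulti F k (M := V)).toMultilinearMap (fun i => ∑ j, v.repr (u i) j • v j)
            from rfl]
        rw [MultilinearMap.map_sum]
        congr 1
        funext m
        rw [MultilinearMap.map_smul_univ]
        rfl
      rw [expand]
      refine Submodule.sum_mem _ fun m _ => Submodule.smul_mem _ _ ?_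
      by_cases hm : Function.Injective m
      · set S : Finset (Fin n) := Finset.univ.image m with hS
        have hcard : S.card = k := by
          rw [hS, Finset.card_image_of_injective _ hm, Finset.card_univ, Fintype.card_fin]
        have h1 : (ιMulti F k (M := V)) (fun i => v (m i)) = wL F ((List.ofFn m).map v) := by
          rw [List.map_ofFn, wL_ofFn]
          rfl
        have hperm : (List.ofFn m).Perm (S.sort (· ≤ ·)) := by
          apply List.perm_of_nodup_nodup_toFinset_eq (List.nodup_ofFn.2 hm)
            (Finset.sort_nodup _ _)
          rw [Finset.sort_toFinset]
          ext a
          simp [hS, List.mem_ofFn, Finset.mem_image, eq_comm]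
        rcases wL_perm (F := F) (hperm.map v) with h | h
        · rw [h1, h]
          exact Submodule.subset_span ⟨⟨S, hcard⟩, rfl⟩
        · rw [h1, h]
          exact neg_mem (Submodule.subset_span ⟨⟨S, hcard⟩, rfl⟩)
      · rw [AlternatingMap.map_eq_zero_of_not_injective _ _
          (fun hinj => hm (fun a c hac => hinj (by simp [hac])))]
        exact zero_mem _
  | zero => exact zero_mem _
  | add x y _ _ hx hy => exact add_mem hx hy
  | smul s x _ hx => exact Submodule.smul_mem _ _ hx

lemma pairing_nondeg (v : Module.Basis (Fin n) F V) {ℓ : ℕ} (hℓ : ℓ ≤ n)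
    (b : ExteriorAlgebra F V →ₗ[F] F)
    (hb_inj : ∀ z ∈ ⋀[F]^n V, b z = 0 → z = 0)
    {D : ExteriorAlgebra F V} (hD : D ∈ ⋀[F]^(n - ℓ) V)
    (hDb : ∀ y ∈ ⋀[F]^ℓ V, b (D * y) = 0) : D = 0 := by
  classical
  have hsp := mem_span_eS v hD
  rw [Submodule.mem_span_range_iff_exists_fun F] at hsp
  obtain ⟨c, hc⟩ := hsp
  have hbuniv : b (eS v Finset.univ) ≠ 0 := fun h =>
    eS_univ_ne_zero v (hb_inj _ (by
      have := eS_mem v (Finset.univ : Finset (Fin n))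
      rwa [Finset.card_univ, Fintype.card_fin] at this) h)
  have hcoef : ∀ T : {S : Finset (Fin n) // S.card = n - ℓ}, c T = 0 := by
    intro T
    have hTc : ((T : Finset (Fin n))ᶜ).card = ℓ := by
      rw [Finset.card_compl, T.2, Fintype.card_fin]
      omega
    have hy : eS v ((T : Finset (Fin n))ᶜ) ∈ ⋀[F]^ℓ V := by
      have := eS_mem v ((T : Finset (Fin n))ᶜ)
      rwa [hTc] at this
    have h0 := hDb _ hy
    rw [← hc, Finset.sum_mul, map_sum] at h0
    rw [Finset.sum_eq_single T] at h0
    · rw [smul_mul_assoc, map_smul, smul_eq_mul] at h0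
      rcases eS_mul_compl v (T : Finset (Fin n)) with h | h <;> rw [h] at h0
      · exact (mul_eq_zero.1 h0).resolve_right hbuniv
      · rw [map_neg] at h0
        rcases mul_eq_zero.1 h0 with h' | h'
        · exact h'
        · exact absurd (neg_eq_zero.1 h') hbuniv
    · intro S _ hST
      have hSn : (S : Finset (Fin n)) ≠ (T : Finset (Fin n)) :=
        fun h => hST (Subtype.ext h)
      have hnd : ¬ Disjoint (S : Finset (Fin n)) ((T : Finset (Fin n))ᶜ) := by
        have hsub : ¬ (S : Finset (Fin n)) ⊆ (T : Finset (Fin n)) := fun hsub =>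
          hSn (Finset.eq_of_subset_of_card_le hsub (by rw [S.2, T.2]))
        obtain ⟨i, hiS, hiT⟩ := Finset.not_subset.1 hsub
        exact Finset.not_disjoint_iff.2 ⟨i, hiS, Finset.mem_compl.2 hiT⟩
      rw [smul_mul_assoc, eS_mul_eq_zero v hnd, smul_zero, map_zero]
    · intro hT
      exact absurd (Finset.mem_univ T) hT
  rw [← hc]
  simp [hcoef]

end Aux3
section Aux4
variable {F V : Type*} [Field F] [AddCommGroup V] [Module F V]

lemma map_mem_exteriorPower (f : V →ₗ[F] V) (k : ℕ) {z : ExteriorAlgebra F V}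
    (hz : z ∈ ⋀[F]^k V) : ExteriorAlgebra.map f z ∈ ⋀[F]^k V := by
  rw [← ιMulti_span_fixedDegree] at hz
  induction hz using Submodule.span_induction with
  | mem x hx =>
      obtain ⟨u, rfl⟩ := hx
      rw [map_apply_ιMulti]
      exact ιMulti_range F k (Set.mem_range_self _)
  | zero => rw [map_zero]; exact zero_mem _
  | add x y _ _ hx hy => rw [map_add]; exact add_mem hx hy
  | smul s x _ hx => rw [map_smul]; exact Submodule.smul_mem _ _ hx

lemma mul_mem_pow {a c : ℕ} {z y : ExteriorAlgebra F V}
    (hz : z ∈ ⋀[F]^a V) (hy : y ∈ ⋀[F]^c V) : z * y ∈ ⋀[F]^(a + c) V := by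
  rw [show (⋀[F]^(a+c) V) = (LinearMap.range (ι F : V →ₗ[F] ExteriorAlgebra F V))^(a+c) from rfl,
    pow_add]
  exact Submodule.mul_mem_mul hz hy

end Aux4
theorem similitude_conjugates_hodge
    {F V : Type*} [Field F] [AddCommGroup V] [Module F V] [FiniteDimensional F V]
    (n ℓ : ℕ) (hfr : Module.finrank F V = n) (hℓ : ℓ ≤ n)
    (σ : F ≃+* F) (hσ : ∀ a, σ (σ a) = a)
    (h : V → V → F)
    (h_add_left : ∀ u u' w, h (u + u') w = h u w + h u' w)
    (h_add_right : ∀ u w w', h u (w + w') = h u w + h u w')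
    (h_smul_left : ∀ (s : F) u w, h (s • u) w = σ s * h u w)
    (h_smul_right : ∀ (s : F) u w, h u (s • w) = s * h u w)
    (h_herm : ∀ u w, h w u = σ (h u w))
    (h_nondeg : ∀ u, (∀ w, h u w = 0) → u = 0)
    (v : Module.Basis (Fin n) F V)
    (h_orth : ∀ i j, i ≠ j → h (v i) (v j) = 0)
    (H : ExteriorAlgebra F V → ExteriorAlgebra F V → F)
    (H_add_left : ∀ x x' y, H (x + x') y = H x y + H x' y)
    (H_add_right : ∀ x y y', H x (y + y') = H x y + H x y')
    (H_smul_left : ∀ (s : F) x y, H (s • x) y = σ s * H x y)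
    (H_smul_right : ∀ (s : F) x y, H x (s • y) = s * H x y)
    (H_det : ∀ (k : ℕ) (u w : Fin k → V),
      H (wedgeFam F u) (wedgeFam F w) = Matrix.det (Matrix.of fun i j => h (u i) (w j)))
    (H_cross : ∀ (k m : ℕ), k ≠ m → ∀ x ∈ ⋀[F]^k V, ∀ y ∈ ⋀[F]^m V, H x y = 0)
    (b : ExteriorAlgebra F V →ₗ[F] F)
    (hb_inj : ∀ z ∈ ⋀[F]^n V, b z = 0 → z = 0)
    (hb_off : ∀ (k : ℕ), k ≠ n → ∀ z ∈ ⋀[F]^k V, b z = 0)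
    (J : ExteriorAlgebra F V → ExteriorAlgebra F V)
    (hJ_mem : ∀ x ∈ ⋀[F]^ℓ V, J x ∈ ⋀[F]^(n - ℓ) V)
    (hJ_char : ∀ x ∈ ⋀[F]^ℓ V, ∀ y ∈ ⋀[F]^ℓ V, b (J x * y) = H x y)
    (lam : V ≃ₗ[F] V) (r : F) (hr : r ≠ 0)
    (hsim : ∀ u w : V, h (lam u) (lam w) = r * h u w) :
    ∀ x ∈ ⋀[F]^ℓ V,
      ExteriorAlgebra.map (lam : V →ₗ[F] V) (J x)
        = (LinearMap.det (lam : V →ₗ[F] V) / r ^ ℓ)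
            • J (ExteriorAlgebra.map (lam : V →ₗ[F] V) x) := by
  classical
  set lamL : V →ₗ[F] V := (lam : V →ₗ[F] V) with hlamL
  -- Step 1 : b ∘ Λ = det • b on top degree
  have hdet1 : ∀ z ∈ ⋀[F]^n V, b (ExteriorAlgebra.map lamL z) = LinearMap.det lamL * b z := by
    intro z hz
    rw [← ιMulti_span_fixedDegree] at hz
    induction hz using Submodule.span_induction with
    | mem x hx =>
        obtain ⟨u, rfl⟩ := hx
        rw [map_apply_ιMulti]
        have h1 : (b.compAlternatingMap (ιMulti F n (M := V)))
            = (b.compAlternatingMap (ιMulti F n (M := V))) v • v.det :=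
          (b.compAlternatingMap (ιMulti F n (M := V))).eq_smul_basis_det v
        have e1 : b ((ιMulti F n) (⇑lamL ∘ u))
            = b ((ιMulti F n) ⇑v) * v.det (⇑lamL ∘ u) := by
          have := congrArg (fun f => f (⇑lamL ∘ u)) h1
          simpa [smul_eq_mul] using this
        have e2 : b ((ιMulti F n) u) = b ((ιMulti F n) ⇑v) * v.det u := by
          have := congrArg (fun f => f u) h1
          simpa [smul_eq_mul] using this
        rw [e1, e2, Module.Basis.det_comp]
        ring
    | zero => simp
    | add x y _ _ hx hy => rw [map_add, map_add, map_add, hx, hy]; ring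
    | smul s x _ hx => rw [map_smul, map_smul, map_smul, hx]; simp; ring
  -- basic H facts
  have Hx0 : ∀ x, H x 0 = 0 := by
    intro x
    have := H_smul_right 0 x 0
    simpa using this
  have H0x : ∀ y, H 0 y = 0 := by
    intro y
    have := H_smul_left 0 0 y
    simpa using this
  -- Step 2 : H (Λ x) (Λ y) = r^ℓ * H x y on degree ℓ
  have hH2 : ∀ x ∈ ⋀[F]^ℓ V, ∀ y ∈ ⋀[F]^ℓ V,
      H (ExteriorAlgebra.map lamL x) (ExteriorAlgebra.map lamL y) = r ^ ℓ * H x y := by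
    have hwedge : ∀ (u w : Fin ℓ → V),
        H ((ιMulti F ℓ) u) ((ιMulti F ℓ) w) = Matrix.det (Matrix.of fun i j => h (u i) (w j)) := by
      intro u w
      have huw := H_det ℓ u w
      unfold wedgeFam at huw
      rw [ιMulti_apply, ιMulti_apply]
      exact huw
    intro x hx y hy
    rw [← ιMulti_span_fixedDegree] at hx hy
    induction hx using Submodule.span_induction with
    | mem x hx =>
        induction hy using Submodule.span_induction with
        | mem y hy =>
            obtain ⟨u, rfl⟩ := hx
            obtain ⟨w, rfl⟩ := hy
            rw [map_apply_ιMulti, map_apply_ιMulti, hwedge, hwedge]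
            have hmat : (Matrix.of fun i j => h ((⇑lamL ∘ u) i) ((⇑lamL ∘ w) j))
                = r • (Matrix.of fun i j => h (u i) (w j)) := by
              ext i j
              simp [hlamL, hsim]
            rw [hmat, Matrix.det_smul, Fintype.card_fin]
        | zero => rw [map_zero, Hx0, Hx0]; ring
        | add y₁ y₂ _ _ h₁ h₂ => rw [map_add, H_add_right, H_add_right, h₁, h₂]; ring
        | smul s y _ h₁ => rw [map_smul, H_smul_right, H_smul_right, h₁]; ring
    | zero => rw [map_zero, H0x, H0x]; ring
    | add x₁ x₂ _ _ h₁ h₂ => rw [map_add, H_add_left, H_add_left, h₁, h₂]; ring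
    | smul s x _ h₁ => rw [map_smul, H_smul_left, H_smul_left, h₁]; ring
  intro x hx
  have hrl : r ^ ℓ ≠ 0 := pow_ne_zero _ hr
  set t : F := LinearMap.det lamL / r ^ ℓ with ht
  have hJx := hJ_mem x hx
  have hΛx : ExteriorAlgebra.map lamL x ∈ ⋀[F]^ℓ V := map_mem_exteriorPower _ _ hx
  have hJΛx := hJ_mem _ hΛx
  have key : ∀ y ∈ ⋀[F]^ℓ V,
      b ((ExteriorAlgebra.map lamL (J x) - t • J (ExteriorAlgebra.map lamL x)) * y) = 0 := by
    intro y hy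
    set y' : ExteriorAlgebra F V := ExteriorAlgebra.map (lam.symm : V →ₗ[F] V) y with hy'
    have hy'mem : y' ∈ ⋀[F]^ℓ V := map_mem_exteriorPower _ _ hy
    have hyy : ExteriorAlgebra.map lamL y' = y := by
      rw [hy']
      have hcomp : lamL ∘ₗ (lam.symm : V →ₗ[F] V) = LinearMap.id :=
        LinearMap.ext fun w => lam.apply_symm_apply w
      calc ExteriorAlgebra.map lamL (ExteriorAlgebra.map (lam.symm : V →ₗ[F] V) y)
          = ((ExteriorAlgebra.map lamL).comp
              (ExteriorAlgebra.map (lam.symm : V →ₗ[F] V))) y := rfl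
        _ = y := by rw [map_comp_map, hcomp, map_id]; rfl
    have h1 : b (ExteriorAlgebra.map lamL (J x) * y) = LinearMap.det lamL * H x y' := by
      rw [← hyy, ← map_mul]
      have hmemn : J x * y' ∈ ⋀[F]^n V := by
        have := mul_mem_pow hJx hy'mem
        rwa [Nat.sub_add_cancel hℓ] at this
      rw [hdet1 _ hmemn, hJ_char x hx y' hy'mem]
    have h2 : b (J (ExteriorAlgebra.map lamL x) * y) = r ^ ℓ * H x y' := by
      rw [← hyy, hJ_char _ hΛx _ (map_mem_exteriorPower _ _ hy'mem), hH2 x hx y' hy'mem]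
    rw [sub_mul, map_sub, smul_mul_assoc, map_smul, smul_eq_mul, h1, h2, ht]
    field_simp
    ring
  have hDmem : ExteriorAlgebra.map lamL (J x) - t • J (ExteriorAlgebra.map lamL x)
      ∈ ⋀[F]^(n - ℓ) V := by
    have h1 : ExteriorAlgebra.map lamL (J x) ∈ ⋀[F]^(n - ℓ) V :=
      map_mem_exteriorPower _ _ hJx
    exact sub_mem h1 (Submodule.smul_mem _ _ hJΛx)
  have hfin := pairing_nondeg v hℓ b hb_inj hDmem key
  exact sub_eq_zero.1 hfin
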